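/- Let U ⊆ ℂ^n be open, let f, g : U → ℂ be holomorphic, and let x ∈ U with f(x) ≠ 0 and g(x) ≠ 0. If the complex Fréchet derivatives of f and g at x are linearly independent over ℂ, then the real Fréchet derivatives of the functions z ↦ |f(z)|² and z ↦ |g(z)|² at x are linearly independent over ℝ. -/

import Mathlib

/-- **Lemma (iv).** Let `f, g` be holomorphic on an open set
`U ⊆ ℂ^n` and `x ∈ U` with `f x ≠ 0` and `g x ≠ 0`.  If the complex Fréchet
derivatives of `f` and `g` at `x` are linearly independent over `ℂ`, then the real
Fréchet derivatives of `z ↦ |f z|²` and `z ↦ |g z|²` at `x` are linearly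
independent over `ℝ`. -/
theorem independent_differentials_of_abs_sq {n : ℕ} (U : Set (Fin n → ℂ))
    (hU : IsOpen U) (f g : (Fin n → ℂ) → ℂ) (x : Fin n → ℂ) (hx : x ∈ U)
    (hf : DifferentiableOn ℂ f U) (hg : DifferentiableOn ℂ g U)
    (hfx : f x ≠ 0) (hgx : g x ≠ 0)
    (hind : LinearIndependent ℂ ![fderiv ℂ f x, fderiv ℂ g x]) :
    LinearIndependent ℝ
      ![fderiv ℝ (fun z => ‖f z‖ ^ 2) x, fderiv ℝ (fun z => ‖g z‖ ^ 2) x] := by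
  have hxU : U ∈ nhds x := hU.mem_nhds hx
  have hfa : DifferentiableAt ℂ f x := (hf.differentiableAt hxU)
  have hga : DifferentiableAt ℂ g x := (hg.differentiableAt hxU)
  set F := fderiv ℂ f x with hFdef
  set G := fderiv ℂ g x with hGdef
  have hF : HasFDerivAt f F x := hfa.hasFDerivAt
  have hG : HasFDerivAt g G x := hga.hasFDerivAt
  have hF2 : HasFDerivAt (fun z => ‖f z‖ ^ 2)
      (2 • (innerSL ℝ (f x)).comp (F.restrictScalars ℝ)) x :=
    (hF.restrictScalars ℝ).norm_sq
  have hG2 : HasFDerivAt (fun z => ‖g z‖ ^ 2)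
      (2 • (innerSL ℝ (g x)).comp (G.restrictScalars ℝ)) x :=
    (hG.restrictScalars ℝ).norm_sq
  rw [LinearIndependent.pair_iff] at hind
  rw [hF2.fderiv, hG2.fderiv, LinearIndependent.pair_iff]
  intro a b hab
  -- evaluate hab at arbitrary v
  have key : ∀ v : Fin n → ℂ,
      ((a : ℂ) * starRingEnd ℂ (f x) * F v + (b : ℂ) * starRingEnd ℂ (g x) * G v).re = 0 := by
    intro v
    have := congrArg (fun (L : (Fin n → ℂ) →L[ℝ] ℝ) => L v) hab
    simp only [ContinuousLinearMap.add_apply, ContinuousLinearMap.smul_apply,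
      ContinuousLinearMap.zero_apply, ContinuousLinearMap.coe_smul', Pi.smul_apply,
      ContinuousLinearMap.comp_apply, ContinuousLinearMap.coe_restrictScalars',
      innerSL_apply_apply, smul_eq_mul, nsmul_eq_mul, Nat.cast_ofNat] at this
    have hinner : ∀ (z w : ℂ), (inner ℝ z w : ℝ) = (starRingEnd ℂ z * w).re := fun _ _ => by rw [Complex.inner, mul_comm]
    rw [hinner, hinner] at this
    simp only [Complex.add_re, Complex.mul_re, Complex.mul_im, Complex.ofReal_re,
      Complex.ofReal_im, Complex.conj_re, Complex.conj_im] at this ⊢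
    nlinarith [this]
  have key2 : ((a : ℂ) * starRingEnd ℂ (f x)) • F + ((b : ℂ) * starRingEnd ℂ (g x)) • G = 0 := by
    ext v
    simp only [ContinuousLinearMap.add_apply, ContinuousLinearMap.smul_apply,
      ContinuousLinearMap.zero_apply, smul_eq_mul]
    apply Complex.ext
    · simpa using key v
    · have h2 := key (Complex.I • v)
      rw [map_smul, map_smul, smul_eq_mul, smul_eq_mul] at h2
      have heq : (a : ℂ) * starRingEnd ℂ (f x) * (Complex.I * F v)
          + (b : ℂ) * starRingEnd ℂ (g x) * (Complex.I * G v)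
          = Complex.I * ((a : ℂ) * starRingEnd ℂ (f x) * F v
            + (b : ℂ) * starRingEnd ℂ (g x) * G v) := by ring
      rw [heq, Complex.I_mul_re] at h2
      have h2' : (↑a * starRingEnd ℂ (f x) * F v + ↑b * starRingEnd ℂ (g x) * G v).im = 0 := by
        linarith
      simpa using h2'
  obtain ⟨h1, h2⟩ := hind _ _ key2
  constructor
  · have : (a : ℂ) = 0 := by
      rcases mul_eq_zero.1 h1 with h | h
      · exact h
      · exact absurd h (by simpa using hfx)
    exact_mod_cast this
  · have : (b : ℂ) = 0 := by
      rcases mul_eq_zero.1 h2 with h | h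
      · exact h
      · exact absurd h (by simpa using hgx)
    exact_mod_cast this
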